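/- Let f : ℝ² → ℝ. The inequality f(AM, GM) ≥ 0 holds for every finite nonempty list of nonnegative real numbers (where AM and GM are the arithmetic and geometric means of the list) if and only if every (a,g) ∈ ℝ² with g ≥ 0 and a ≥ g satisfies f(a,g) ≥ 0. -/

import Mathlib

theorem stmt_2 (f : ℝ × ℝ → ℝ) :
    (∀ l : List ℝ, l ≠ [] → (∀ x ∈ l, 0 ≤ x) →
        0 ≤ f (l.sum / l.length, l.prod ^ ((1 : ℝ) / l.length))) ↔
      ∀ a g : ℝ, 0 ≤ g → g ≤ a → 0 ≤ f (a, g) := by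
  constructor
  · intro h a g hg hga
    have ha : 0 ≤ a := hg.trans hga
    set d := Real.sqrt (a ^ 2 - g ^ 2) with hd
    have hd0 : 0 ≤ d := Real.sqrt_nonneg _
    have hd2 : d ^ 2 = a ^ 2 - g ^ 2 := Real.sq_sqrt (by nlinarith)
    have hda : d ≤ a := by nlinarith
    have := h [a + d, a - d] (by simp) (by
      intro x hx
      simp at hx
      rcases hx with h1 | h1 <;> rw [h1] <;> linarith)
    have hsum : ([a + d, a - d] : List ℝ).sum = 2 * a := by simp; ring
    have hprod : ([a + d, a - d] : List ℝ).prod = g ^ 2 := by simp; nlinarith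
    have hlen : (([a + d, a - d] : List ℝ).length : ℝ) = 2 := by simp
    rw [hsum, hprod, hlen] at this
    have h2 : (2 : ℝ) * a / 2 = a := by ring
    have h3 : (g ^ 2) ^ ((1 : ℝ) / 2) = g := by
      rw [← Real.rpow_natCast g 2, ← Real.rpow_mul hg]
      norm_num
    rwa [h2, h3] at this
  · intro h l hne hpos
    apply h
    · exact Real.rpow_nonneg (List.prod_nonneg hpos) _
    · have hn : 0 < (l.length : ℝ) := by
        simpa using List.length_pos_iff.mpr hne
      have key := Real.geom_mean_le_arith_mean_weighted (Finset.univ : Finset (Fin l.length))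
        (fun _ => 1 / l.length) (fun i => l.get i)
        (fun i _ => by positivity)
        (by simp; field_simp)
        (fun i _ => hpos _ (l.get_mem _))
      beta_reduce at key
      have hprod : ∏ i : Fin l.length, l.get i ^ ((1 : ℝ) / l.length)
          = l.prod ^ ((1 : ℝ) / l.length) := by
        rw [Real.finset_prod_rpow _ _ (fun i _ => hpos _ (l.get_mem _))]
        congr 1
        exact Fin.prod_univ_getElem l
      have hsumm : ∑ i : Fin l.length, (1 : ℝ) / l.length * l.get i
          = l.sum / l.length := by
        rw [← Finset.mul_sum]
        rw [show ∑ i : Fin l.length, l.get i = l.sum from Fin.sum_univ_getElem l]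
        ring
      rw [hprod, hsumm] at key
      exact key
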